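/- Fix γ ∈ (0,1) and α ∈ (γ,1). Set δ = α/γ − 1 and β = δ²γ/(2+δ). For T ∈ ℕ and i.i.d. Bernoulli(γ) random variables ξ = (ξ₁,…,ξ_T), define N*(ξ) as the maximal n ∈ {1,…,T} such that S(ξ, n) ≥ α·n, and N*(ξ) = 0 if no such n exists. Then E[N*(ξ)] ≤ e^β/(e^β − 1)². -/

import Mathlib

namespace Caching

attribute [local instance low] Classical.propDecidable

/-- A run of a feasible eviction strategy on the request sequence `σ` with cache size `k`
and time horizon `T`.  `C t` is the cache after processing request `t` (with `C 0 = ∅`),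
and `p t` is the page evicted at time `t` (meaningful at full-cache misses). -/
structure CacheRun (S : Type) [DecidableEq S] (k T : ℕ) (σ : ℕ → S) where
  C : ℕ → Finset S
  p : ℕ → S
  init : C 0 = ∅
  card_le : ∀ t, (C t).card ≤ k
  hit : ∀ t, 1 ≤ t → t ≤ T → (σ t ∈ C (t - 1) ∨ (C (t - 1)).card < k) →
      C t = insert (σ t) (C (t - 1))
  evict_mem : ∀ t, 1 ≤ t → t ≤ T → σ t ∉ C (t - 1) → (C (t - 1)).card = k →
      p t ∈ C (t - 1)
  evict : ∀ t, 1 ≤ t → t ≤ T → σ t ∉ C (t - 1) → (C (t - 1)).card = k →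
      C t = insert (σ t) ((C (t - 1)).erase (p t))

variable {S : Type} [DecidableEq S]

/- `nextReq σ T t` is `ν(t)`: the first time `s > t` (with `s ≤ T`) at which the page
`σ t` is requested again, and `T + 1` if there is no such time. -/
open Classical in
noncomputable def nextReq (σ : ℕ → S) (T t : ℕ) : ℕ :=
  if h : ∃ s, t < s ∧ s ≤ T ∧ σ s = σ t then Nat.find h else T + 1

/-- The total prediction loss `η = Σ_{t=1}^T |ν(t) - ω(t)|`. -/
noncomputable def totalLoss (σ : ℕ → S) (T : ℕ) (ω : ℕ → ℕ) : ℕ :=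
  ∑ t ∈ Finset.Icc 1 T, Nat.dist (nextReq σ T t) (ω t)

/-- `I_Q(t)`: indices of the last requests (up to time `t`) of the currently cached pages. -/
noncomputable def lastIdx {k T : ℕ} {σ : ℕ → S} (R : CacheRun S k T σ) (t : ℕ) : Finset ℕ :=
  (Finset.Icc 1 t).filter fun i => σ i ∈ R.C t ∧ ∀ j ∈ Finset.Icc (i + 1) t, σ j ≠ σ i

/-- Time `t` is a full-cache miss (an eviction step). -/
def EvictStep {k T : ℕ} {σ : ℕ → S} (R : CacheRun S k T σ) (t : ℕ) : Prop :=
  1 ≤ t ∧ t ≤ T ∧ σ t ∉ R.C (t - 1) ∧ (R.C (t - 1)).card = k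

/-- At time `t` the run evicts the page whose last-request index is `i`. -/
def EvictsIdx {k T : ℕ} {σ : ℕ → S} (R : CacheRun S k T σ) (t i : ℕ) : Prop :=
  EvictStep R t ∧ i ∈ lastIdx R (t - 1) ∧ R.p t = σ i

/-- `OBJ_Q`: the number of cache misses of the run. -/
noncomputable def misses {k T : ℕ} {σ : ℕ → S} (R : CacheRun S k T σ) : ℕ :=
  ((Finset.Icc 1 T).filter fun t => σ t ∉ R.C (t - 1)).card

/-- Belady's algorithm: on a full-cache miss always evict the cached page with the
largest next-request time. -/
def IsBelady {k T : ℕ} {σ : ℕ → S} (A : CacheRun S k T σ) : Prop :=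
  ∀ t, EvictStep A t → ∀ i ∈ lastIdx A (t - 1), A.p t = σ i →
    ∀ j ∈ lastIdx A (t - 1), nextReq σ T j ≤ nextReq σ T i

/-- BlindOracle: on a full-cache miss always evict the cached page with the largest
predicted next-request time. -/
def IsBlindOracle {k T : ℕ} {σ : ℕ → S} (B : CacheRun S k T σ) (ω : ℕ → ℕ) : Prop :=
  ∀ t, EvictStep B t → ∀ i ∈ lastIdx B (t - 1), B.p t = σ i →
    ∀ j ∈ lastIdx B (t - 1), ω j ≤ ω i

/-- An eviction graph of a run: a directed graph on `{1,…,T}` whose every edge `(i, j)`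
corresponds to a distinct time (`time e`) at which the run made a mistake by evicting
page `σ j` while `i` was a strictly better eviction candidate in the cache. -/
structure EvictionGraph {k T : ℕ} {σ : ℕ → S} (R : CacheRun S k T σ) where
  E : Finset (ℕ × ℕ)
  time : ℕ × ℕ → ℕ
  time_inj : ∀ e ∈ E, ∀ e' ∈ E, time e = time e' → e = e'
  mistake : ∀ e ∈ E, EvictsIdx R (time e) e.2 ∧ e.1 ∈ lastIdx R (time e - 1) ∧
      nextReq σ T e.2 < nextReq σ T e.1

/-- The eviction at time `t` triggers the eviction at time `t'`: the page evicted
at `t` is next requested at `t' = ν(i)`, which is again an eviction step. -/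
def Triggers {k T : ℕ} {σ : ℕ → S} (R : CacheRun S k T σ) (t t' : ℕ) : Prop :=
  ∃ i, EvictsIdx R t i ∧ t' = nextReq σ T i ∧ ∃ j, EvictsIdx R t' j

/-- The eviction of the page with last-request index `i` triggers the eviction of the
page with last-request index `j` (at time `ν(i)`). -/
def TriggersIdx {k T : ℕ} {σ : ℕ → S} (R : CacheRun S k T σ) (i j : ℕ) : Prop :=
  (∃ t, EvictsIdx R t i) ∧ EvictsIdx R (nextReq σ T i) j

/-- The page requested at time `t` was never requested before. -/
def NewPage (σ : ℕ → S) (t : ℕ) : Prop := ∀ s, 1 ≤ s → s < t → σ s ≠ σ t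

/-- At time `t` the evicted page has the largest prediction among cached pages. -/
def BlindChoiceAt {k T : ℕ} {σ : ℕ → S} (R : CacheRun S k T σ) (ω : ℕ → ℕ) (t : ℕ) : Prop :=
  ∀ i ∈ lastIdx R (t - 1), R.p t = σ i → ∀ j ∈ lastIdx R (t - 1), ω j ≤ ω i

/-- Corrector's choice at time `t`: if some cached page has a provably wrong prediction
(`ω i < t`), evict such a page with minimal prediction; otherwise act as BlindOracle. -/
def CorrectorChoiceAt {k T : ℕ} {σ : ℕ → S} (R : CacheRun S k T σ) (ω : ℕ → ℕ) (t : ℕ) :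
    Prop :=
  ((∃ i ∈ lastIdx R (t - 1), ω i < t) →
    ∀ i ∈ lastIdx R (t - 1), R.p t = σ i →
      ω i < t ∧ ∀ j ∈ lastIdx R (t - 1), ω j < t → ω i ≤ ω j) ∧
  ((¬ ∃ i ∈ lastIdx R (t - 1), ω i < t) → BlindChoiceAt R ω t)

/-- The page requested at time `t` was last evicted (before `t`) at a step labeled with
strategy `s₀` (0 = BlindOracle, 1 = RandomAlg, 2 = Corrector). -/
def LastEvictedWith {k T : ℕ} {σ : ℕ → S} (R : CacheRun S k T σ) (strat : ℕ → Fin 3)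
    (t : ℕ) (s₀ : Fin 3) : Prop :=
  ∃ t₀, t₀ < t ∧ EvictStep R t₀ ∧ R.p t₀ = σ t ∧ strat t₀ = s₀ ∧
    ∀ t₁, t₀ < t₁ → t₁ < t → ¬(EvictStep R t₁ ∧ R.p t₁ = σ t)

/-- A run of the AlternatingOracle strategy (for a fixed realization of its random
choices), together with the labeling `strat` of which of the three strategies was used
at each eviction step: on a miss for a never-requested page use BlindOracle; if the
requested page was last evicted by BlindOracle use RandomAlg (an arbitrary cached page);
if by RandomAlg use Corrector; if by Corrector use BlindOracle. -/
def IsAlternatingOracle {k T : ℕ} {σ : ℕ → S} (R : CacheRun S k T σ) (ω : ℕ → ℕ)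
    (strat : ℕ → Fin 3) : Prop :=
  ∀ t, EvictStep R t →
    (NewPage σ t → strat t = 0 ∧ BlindChoiceAt R ω t) ∧
    (LastEvictedWith R strat t 0 → strat t = 1) ∧
    (LastEvictedWith R strat t 1 → strat t = 2 ∧ CorrectorChoiceAt R ω t) ∧
    (LastEvictedWith R strat t 2 → strat t = 0 ∧ BlindChoiceAt R ω t)

/-- AlternatingOracle driven by a seed `u` of uniform random values: at each eviction
step performed by RandomAlg at time `t`, the evicted page is the one whose last-request
index has rank `u t` among the `k` cached indices, so that for a uniformly random seed
the evicted page is uniform over the cache. -/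
def IsAlternatingOracleSeeded {k T : ℕ} {σ : ℕ → S} (R : CacheRun S k T σ) (ω : ℕ → ℕ)
    (strat : ℕ → Fin 3) (u : Fin (T + 1) → Fin k) : Prop :=
  IsAlternatingOracle R ω strat ∧
  ∀ t (h : EvictStep R t), strat t = 1 →
    ∀ i ∈ lastIdx R (t - 1), R.p t = σ i →
      ((lastIdx R (t - 1)).filter fun j => j < i).card =
        ((u ⟨t, Nat.lt_succ_of_le h.2.1⟩ : Fin k) : ℕ)

/-- The family of runs is adapted to the seeds: the behavior up to time `t` depends only
on the seed values with index at most `t` (the strategy is online). -/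
def Adapted {k T : ℕ} {σ : ℕ → S} (R : (Fin (T + 1) → Fin k) → CacheRun S k T σ)
    (strat : (Fin (T + 1) → Fin k) → ℕ → Fin 3) : Prop :=
  ∀ u u' t, (∀ s : Fin (T + 1), (s : ℕ) ≤ t → u s = u' s) →
    (R u).C t = (R u').C t ∧ (R u).p t = (R u').p t ∧ strat u t = strat u' t

/-- The probability of the outcome `x` for `T` i.i.d. Bernoulli(γ) random bits. -/
noncomputable def bernWeight (γ : ℝ) {T : ℕ} (x : Fin T → Bool) : ℝ :=
  ∏ i, if x i then γ else 1 - γ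

/-- `S(x, m)`: the number of ones among the first `m` coordinates of `x`. -/
noncomputable def scount {T : ℕ} (x : Fin T → Bool) (m : ℕ) : ℕ :=
  (Finset.univ.filter fun i : Fin T => (i : ℕ) < m ∧ x i).card


private lemma aux_log_ge {x : ℝ} (hx : 0 ≤ x) : 2 * x / (2 + x) ≤ Real.log (1 + x) := by
  set f : ℝ → ℝ := fun y => Real.log (1 + y) - 2 * y / (2 + y) with hf
  have hder : ∀ y : ℝ, 0 < y →
      HasDerivAt f (1 / (1 + y) - (2 * (2 + y) - 2 * y * 1) / (2 + y) ^ 2) y := by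
    intro y hy
    have h1 : HasDerivAt (fun y : ℝ => 1 + y) 1 y := (hasDerivAt_id y).const_add 1
    have hlog : HasDerivAt (fun y : ℝ => Real.log (1 + y)) (1 / (1 + y)) y :=
      h1.log (by linarith)
    have hc : HasDerivAt (fun y : ℝ => 2 * y) 2 y := by
      simpa using (hasDerivAt_id y).const_mul 2
    have hd : HasDerivAt (fun y : ℝ => 2 + y) 1 y := (hasDerivAt_id y).const_add 2
    exact hlog.sub (hc.div hd (by linarith))
  have hmono : MonotoneOn f (Set.Ici 0) := by
    apply monotoneOn_of_deriv_nonneg (convex_Ici 0)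
    · apply ContinuousOn.sub
      · apply ContinuousOn.log (by fun_prop)
        intro y hy
        simp only [Set.mem_Ici] at hy; linarith
      · apply ContinuousOn.div (by fun_prop) (by fun_prop)
        intro y hy
        simp only [Set.mem_Ici] at hy; linarith
    · intro y hy
      rw [interior_Ici] at hy
      exact ((hder y hy).differentiableAt).differentiableWithinAt
    · intro y hy
      rw [interior_Ici] at hy
      have hy' : 0 < y := hy
      rw [(hder y hy').deriv]
      have h4 : (2 * (2 + y) - 2 * y * 1) / (2 + y) ^ 2 ≤ 1 / (1 + y) := by
        rw [div_le_div_iff₀ (by positivity) (by linarith)]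
        nlinarith [sq_nonneg y]
      linarith
  have h0 : f 0 ≤ f x := hmono (Set.self_mem_Ici) hx hx
  have : f 0 = 0 := by simp [hf]
  simp only [hf] at h0
  norm_num at h0
  linarith

private lemma card_filter_lt' (T n : ℕ) (hnT : n ≤ T) :
    (Finset.univ.filter fun i : Fin T => (i : ℕ) < n).card = n := by
  have he : (Finset.univ.filter fun i : Fin T => (i : ℕ) < n)
      = (Finset.range n).attachFin
        (fun m hm => lt_of_lt_of_le (Finset.mem_range.mp hm) hnT) := by
    ext i
    simp [Finset.mem_attachFin]
  rw [he, Finset.card_attachFin, Finset.card_range]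

private lemma mgf_eq (γ t : ℝ) (T n : ℕ) (hnT : n ≤ T) :
    ∑ x : Fin T → Bool, bernWeight γ x * Real.exp (t * (scount x n : ℝ)) =
      (γ * Real.exp t + (1 - γ)) ^ n := by
  have hpt : ∀ x : Fin T → Bool, bernWeight γ x * Real.exp (t * (scount x n : ℝ)) =
      ∏ i : Fin T, ((if x i then γ else 1 - γ) *
        Real.exp (t * (if ((i : ℕ) < n ∧ x i) then 1 else 0))) := by
    intro x
    rw [Finset.prod_mul_distrib, ← Real.exp_sum, ← Finset.mul_sum]
    congr 2
    rw [scount, Finset.card_filter]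
    push_cast [apply_ite (fun m : ℕ => (m : ℝ))]
    rfl
  rw [Finset.sum_congr rfl fun x _ => hpt x,
    ← Fintype.prod_sum (fun (i : Fin T) (b : Bool) => ((if b then γ else 1 - γ) *
        Real.exp (t * (if ((i : ℕ) < n ∧ b) then 1 else 0))))]
  have hfac : ∀ i : Fin T, (∑ b : Bool, ((if b then γ else 1 - γ) *
      Real.exp (t * (if ((i : ℕ) < n ∧ b) then 1 else 0)))) =
      (if (i : ℕ) < n then γ * Real.exp t + (1 - γ) else 1) := by
    intro i
    rw [Fintype.sum_bool]
    by_cases h : (i : ℕ) < n <;> simp [h]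
  rw [Finset.prod_congr rfl fun i _ => hfac i, ← Finset.prod_filter,
    Finset.prod_const, card_filter_lt' T n hnT]

private lemma bernWeight_nonneg' {γ : ℝ} (hγ0 : 0 < γ) (hγ1 : γ < 1) {T : ℕ}
    (x : Fin T → Bool) : 0 ≤ bernWeight γ x :=
  Finset.prod_nonneg fun i _ => by split <;> linarith

private lemma chernoff_bound (γ α δ β : ℝ) (hγ0 : 0 < γ) (hγ1 : γ < 1) (hα0 : γ < α)
    (hδ : δ = α / γ - 1) (hβ : β = δ ^ 2 * γ / (2 + δ)) (T n : ℕ) (hnT : n ≤ T) :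
    ∑ x : Fin T → Bool, bernWeight γ x * (if α * n ≤ (scount x n : ℝ) then (1:ℝ) else 0) ≤
      Real.exp (-(β * n)) := by
  have hδ0 : 0 < δ := by
    rw [hδ]
    have : 1 < α / γ := (one_lt_div hγ0).mpr hα0
    linarith
  set t := Real.log (1 + δ) with ht
  have ht0 : 0 < t := Real.log_pos (by linarith)
  have hexp_t : Real.exp t = 1 + δ := Real.exp_log (by linarith)
  have hαγ : α = γ * (1 + δ) := by
    rw [hδ]; field_simp; ring
  have hpt : ∀ x : Fin T → Bool,
      bernWeight γ x * (if α * n ≤ (scount x n : ℝ) then (1:ℝ) else 0) ≤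
      Real.exp (-(t * α * n)) * (bernWeight γ x * Real.exp (t * (scount x n : ℝ))) := by
    intro x
    have hw := bernWeight_nonneg' hγ0 hγ1 x
    rw [mul_comm (Real.exp _) _, mul_assoc]
    apply mul_le_mul_of_nonneg_left _ hw
    rw [← Real.exp_add]
    split_ifs with h
    · apply Real.one_le_exp
      nlinarith
    · positivity
  calc ∑ x : Fin T → Bool, bernWeight γ x * (if α * n ≤ (scount x n : ℝ) then (1:ℝ) else 0)
      ≤ ∑ x : Fin T → Bool,
          Real.exp (-(t * α * n)) * (bernWeight γ x * Real.exp (t * (scount x n : ℝ))) :=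
        Finset.sum_le_sum fun x _ => hpt x
    _ = Real.exp (-(t * α * n)) * (γ * Real.exp t + (1 - γ)) ^ n := by
        rw [← Finset.mul_sum, mgf_eq γ t T n hnT]
    _ ≤ Real.exp (-(β * n)) := by
        have h1γδ : γ * Real.exp t + (1 - γ) = 1 + γ * δ := by rw [hexp_t]; ring
        have hkey : 1 + γ * δ ≤ Real.exp (t * α - β) := by
          have h1 : 1 + γ * δ ≤ Real.exp (γ * δ) := by
            have := Real.add_one_le_exp (γ * δ); linarith
          have h2 : γ * δ ≤ t * α - β := by
            have hl : 2 * δ / (2 + δ) ≤ t := aux_log_ge hδ0.le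
            have h3 : 2 * δ / (2 + δ) * (γ * (1 + δ)) ≤ t * (γ * (1 + δ)) :=
              mul_le_mul_of_nonneg_right hl (by positivity)
            have h4 : 2 * δ / (2 + δ) * (γ * (1 + δ)) = γ * δ + δ ^ 2 * γ / (2 + δ) := by
              field_simp
              ring
            rw [hαγ, hβ]
            linarith
          exact h1.trans (Real.exp_le_exp.mpr h2)
        rw [h1γδ]
        calc Real.exp (-(t * α * n)) * (1 + γ * δ) ^ n
            ≤ Real.exp (-(t * α * n)) * Real.exp (t * α - β) ^ n := by
              apply mul_le_mul_of_nonneg_left _ (Real.exp_nonneg _)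
              exact pow_le_pow_left₀ (by positivity) hkey n
          _ = Real.exp (-(β * n)) := by
              rw [← Real.exp_nat_mul, ← Real.exp_add]
              ring_nf

/-- For i.i.d. Bernoulli(γ) bits, let `N*(ξ)` be the maximal
`n ∈ {1,…,T}` with `S(ξ, n) ≥ α·n` (and `0` if none exists). Then
`E[N*(ξ)] ≤ e^β/(e^β − 1)²`, where `δ = α/γ − 1` and `β = δ²γ/(2+δ)`. -/
theorem stmt14 (γ α δ β : ℝ) (hγ0 : 0 < γ) (hγ1 : γ < 1) (hα0 : γ < α) (hα1 : α < 1)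
    (hδ : δ = α / γ - 1) (hβ : β = δ ^ 2 * γ / (2 + δ))
    (T : ℕ) (Nstar : (Fin T → Bool) → ℕ)
    (hNstar : ∀ x, IsGreatest {n : ℕ | 1 ≤ n ∧ n ≤ T ∧ α * n ≤ (scount x n : ℝ)}
        (Nstar x) ∨
      (Nstar x = 0 ∧ ∀ n : ℕ, 1 ≤ n → n ≤ T → ¬(α * n ≤ (scount x n : ℝ)))) :
    ∑ x : Fin T → Bool, bernWeight γ x * Nstar x ≤
      Real.exp β / (Real.exp β - 1) ^ 2 := by
  have hδ0 : 0 < δ := by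
    rw [hδ]
    have : 1 < α / γ := (one_lt_div hγ0).mpr hα0
    linarith
  have hβ0 : 0 < β := by rw [hβ]; positivity
  set r : ℝ := Real.exp (-β) with hr
  have hr0 : 0 < r := Real.exp_pos _
  have hr1 : r < 1 := Real.exp_lt_one_iff.mpr (by linarith)
  have hwnn : ∀ x : Fin T → Bool, 0 ≤ bernWeight γ x := bernWeight_nonneg' hγ0 hγ1
  have hptw : ∀ x : Fin T → Bool, (Nstar x : ℝ) ≤
      ∑ n ∈ Finset.Icc 1 T,
        (n : ℝ) * (if α * n ≤ (scount x n : ℝ) then (1:ℝ) else 0) := by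
    intro x
    rcases hNstar x with ⟨⟨h1, hT, hev⟩, -⟩ | ⟨h0, -⟩
    · have hmem : Nstar x ∈ Finset.Icc 1 T := Finset.mem_Icc.mpr ⟨h1, hT⟩
      have hle := Finset.single_le_sum
        (f := fun n : ℕ => (n : ℝ) * (if α * n ≤ (scount x n : ℝ) then (1:ℝ) else 0))
        (fun n _ => by positivity) hmem
      simpa [hev] using hle
    · rw [h0]
      push_cast
      exact Finset.sum_nonneg fun n _ => by positivity
  calc ∑ x : Fin T → Bool, bernWeight γ x * Nstar x
      ≤ ∑ x : Fin T → Bool, bernWeight γ x *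
          ∑ n ∈ Finset.Icc 1 T,
            (n : ℝ) * (if α * n ≤ (scount x n : ℝ) then (1:ℝ) else 0) :=
        Finset.sum_le_sum fun x _ => mul_le_mul_of_nonneg_left (hptw x) (hwnn x)
    _ = ∑ n ∈ Finset.Icc 1 T, ∑ x : Fin T → Bool, bernWeight γ x *
          ((n : ℝ) * (if α * n ≤ (scount x n : ℝ) then (1:ℝ) else 0)) := by
        simp_rw [Finset.mul_sum]
        exact Finset.sum_comm
    _ = ∑ n ∈ Finset.Icc 1 T, (n : ℝ) *
          ∑ x : Fin T → Bool, bernWeight γ x *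
            (if α * n ≤ (scount x n : ℝ) then (1:ℝ) else 0) := by
        refine Finset.sum_congr rfl fun n _ => ?_
        rw [Finset.mul_sum]
        exact Finset.sum_congr rfl fun x _ => by ring
    _ ≤ ∑ n ∈ Finset.Icc 1 T, (n : ℝ) * Real.exp (-(β * n)) :=
        Finset.sum_le_sum fun n hn =>
          mul_le_mul_of_nonneg_left
            (chernoff_bound γ α δ β hγ0 hγ1 hα0 hδ hβ T n (Finset.mem_Icc.mp hn).2)
            n.cast_nonneg
    _ = ∑ n ∈ Finset.Icc 1 T, (n : ℝ) * r ^ n := by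
        refine Finset.sum_congr rfl fun n _ => ?_
        rw [hr, ← Real.exp_nat_mul]
        ring_nf
    _ ≤ r / (1 - r) ^ 2 := by
        refine sum_le_hasSum (L := SummationFilter.unconditional ℕ) _ (fun n _ => by positivity) ?_
        exact hasSum_coe_mul_geometric_of_norm_lt_one
          (by rw [Real.norm_eq_abs, abs_of_pos hr0]; exact hr1)
    _ = Real.exp β / (Real.exp β - 1) ^ 2 := by
        have hE1 : 1 < Real.exp β := by nlinarith [Real.add_one_le_exp β]
        have hE0 : (0:ℝ) < Real.exp β := Real.exp_pos _
        have hEinv : (Real.exp β)⁻¹ < 1 := by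
          rw [← Real.exp_neg]; exact Real.exp_lt_one_iff.mpr (by linarith)
        rw [hr, Real.exp_neg,
          div_eq_div_iff
            (show ((1 - (Real.exp β)⁻¹) ^ 2 : ℝ) ≠ 0 from (pow_pos (by linarith) 2).ne')
            (show ((Real.exp β - 1) ^ 2 : ℝ) ≠ 0 from (pow_pos (by linarith) 2).ne')]
        field_simp


end Caching
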